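/- (One-step potential bound.) Let ε > 0, α > 1/2, and 0 < h' ≤ h. Set k = 2h, z = ((12α + 4)/(2α − 1))·h², k' = 2h', z' = ((12α + 4)/(2α − 1))·h'². Then for all V ≥ 0, all S ≥ −h', and all c with −h − min(S, 0) ≤ c ≤ h: φ(V + c² + z + k·(S + c), S + c) − φ(V + z' + k'·S, S) − c·D(V, S) ≤ 0, where D(V, S) = ε·erfi(S/√(4·α·(V + z + k·S))) − (ε·k·√α/(2·√(V + z + k·S)))·exp(S²/(4·α·(V + z + k·S))). -/

import Mathlib

/-- The imaginary error function, `erfi x = ∫ u in 0..x, exp (u²)`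
(the conventional erfi scaled by `√π / 2`). -/
noncomputable def erfi (x : ℝ) : ℝ := ∫ u in (0:ℝ)..x, Real.exp (u ^ 2)

/-- The potential function `φ(x, y) = ε·√(α·x)·(2·∫₀^{y/√(4αx)} erfi(u) du − 1)`. -/
noncomputable def phi (ε α x y : ℝ) : ℝ :=
  ε * Real.sqrt (α * x) *
    (2 * (∫ u in (0:ℝ)..(y / Real.sqrt (4 * α * x)), erfi u) - 1)

/-- `D(V, S)`, the partial derivative in `S` of the shifted potential
`Φ(V, S) = φ(V + z + k·S, S)`. -/
noncomputable def Dfun (ε α k z V S : ℝ) : ℝ :=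
  ε * erfi (S / Real.sqrt (4 * α * (V + z + k * S))) -
    ε * k * Real.sqrt α / (2 * Real.sqrt (V + z + k * S)) *
      Real.exp (S ^ 2 / (4 * α * (V + z + k * S)))

lemma erfi_hasDerivAt (x : ℝ) : HasDerivAt erfi (Real.exp (x ^ 2)) x := by
  have hc : Continuous fun u : ℝ => Real.exp (u ^ 2) :=
    Real.continuous_exp.comp (continuous_pow 2)
  exact intervalIntegral.integral_hasDerivAt_right (hc.intervalIntegrable _ _)
    (hc.stronglyMeasurableAtFilter _ _) hc.continuousAt

lemma erfi_continuous : Continuous erfi :=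
  Differentiable.continuous (fun x => (erfi_hasDerivAt x).differentiableAt)

lemma erfi_integral (b : ℝ) :
    ∫ u in (0:ℝ)..b, erfi u = b * erfi b - (Real.exp (b ^ 2) - 1) / 2 := by
  have h : ∀ u ∈ Set.uIcc (0:ℝ) b,
      HasDerivAt (fun v => v * erfi v - Real.exp (v ^ 2) / 2) (erfi u) u := by
    intro u _
    have h1 : HasDerivAt (fun v : ℝ => v * erfi v)
        (1 * erfi u + u * Real.exp (u ^ 2)) u :=
      (hasDerivAt_id u).mul (erfi_hasDerivAt u)
    have h2 : HasDerivAt (fun v : ℝ => Real.exp (v ^ 2) / 2)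
        (Real.exp (u ^ 2) * (2 * u) / 2) u := by
      exact ((Real.hasDerivAt_exp (u ^ 2)).comp u
        (by simpa using hasDerivAt_pow 2 u : HasDerivAt (fun v : ℝ => v ^ 2) (2 * u) u)).div_const 2
    exact (h1.sub h2).congr_deriv (by ring)
  have := intervalIntegral.integral_eq_sub_of_hasDerivAt h
    (erfi_continuous.intervalIntegrable _ _)
  rw [this]
  simp [erfi]
  ring

lemma sqrt_four_mul (α x : ℝ) (hα : 0 ≤ α) :
    Real.sqrt (4 * α * x) = 2 * (Real.sqrt α * Real.sqrt x) := by
  rw [show (4:ℝ) * α * x = 2 ^ 2 * (α * x) by ring, Real.sqrt_mul (by positivity),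
    Real.sqrt_sq (by norm_num : (0:ℝ) ≤ 2), Real.sqrt_mul hα]

lemma phi_closed (ε α x y : ℝ) (hα : 0 < α) (hx : 0 < x) :
    phi ε α x y = ε * (y * erfi (y / (2 * (Real.sqrt α * Real.sqrt x)))
      - Real.sqrt α * Real.sqrt x *
        Real.exp ((y / (2 * (Real.sqrt α * Real.sqrt x))) ^ 2)) := by
  have hsa : (0:ℝ) < Real.sqrt α := Real.sqrt_pos.2 hα
  have hsx : (0:ℝ) < Real.sqrt x := Real.sqrt_pos.2 hx
  rw [phi, sqrt_four_mul α x hα.le, erfi_integral, Real.sqrt_mul hα.le]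
  set b := y / (2 * (Real.sqrt α * Real.sqrt x)) with hb
  have hby : 2 * b * (Real.sqrt α * Real.sqrt x) = y := by
    rw [hb]; field_simp
  rw [← hby]; ring

noncomputable def thF (β z k V S t : ℝ) : ℝ :=
  (S + t) / (2 * (β * Real.sqrt (V + t ^ 2 + z + k * (S + t))))

noncomputable def NF (β z k V S t : ℝ) : ℝ :=
  (S + t) * erfi (thF β z k V S t) -
    β * Real.sqrt (V + t ^ 2 + z + k * (S + t)) * Real.exp (thF β z k V S t ^ 2)

noncomputable def GF (β z k V S t : ℝ) : ℝ :=
  erfi (thF β z k V S t) -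
    β * (2 * t + k) * Real.exp (thF β z k V S t ^ 2) /
      (2 * Real.sqrt (V + t ^ 2 + z + k * (S + t)))

section deriv

variable (β z k V S c : ℝ)

lemma X_hasDeriv : HasDerivAt (fun t => V + t ^ 2 + z + k * (S + t)) (2 * c + k) c := by
  have h := ((((hasDerivAt_pow 2 c).const_add V).add_const z).add
    (((hasDerivAt_id c).const_add S).const_mul k))
  exact h.congr_deriv (by simp)

lemma sqrtX_hasDeriv (hX : 0 < V + c ^ 2 + z + k * (S + c)) :
    HasDerivAt (fun t => Real.sqrt (V + t ^ 2 + z + k * (S + t)))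
      ((2 * c + k) / (2 * Real.sqrt (V + c ^ 2 + z + k * (S + c)))) c :=
  (X_hasDeriv z k V S c).sqrt hX.ne'

lemma thF_hasDeriv (hβ : 0 < β) (hX : 0 < V + c ^ 2 + z + k * (S + c)) :
    HasDerivAt (thF β z k V S)
      ((2 * (V + c ^ 2 + z + k * (S + c)) - (2 * c + k) * (S + c)) /
        (4 * β * (V + c ^ 2 + z + k * (S + c)) *
          Real.sqrt (V + c ^ 2 + z + k * (S + c)))) c := by
  have hr : 0 < Real.sqrt (V + c ^ 2 + z + k * (S + c)) := Real.sqrt_pos.2 hX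
  have hden : HasDerivAt (fun t => 2 * (β * Real.sqrt (V + t ^ 2 + z + k * (S + t))))
      (2 * (β * ((2 * c + k) / (2 * Real.sqrt (V + c ^ 2 + z + k * (S + c)))))) c :=
    ((sqrtX_hasDeriv z k V S c hX).const_mul β).const_mul 2
  have hnum : HasDerivAt (fun t : ℝ => S + t) 1 c := by
    simpa using (hasDerivAt_id c).const_add S
  have h := hnum.div hden (by positivity)
  have h2 : HasDerivAt (thF β z k V S)
      ((1 * (2 * (β * Real.sqrt (V + c ^ 2 + z + k * (S + c)))) -
        (S + c) * (2 * (β * ((2 * c + k) /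
          (2 * Real.sqrt (V + c ^ 2 + z + k * (S + c))))))) /
        (2 * (β * Real.sqrt (V + c ^ 2 + z + k * (S + c)))) ^ 2) c := by
    exact h
  convert h2 using 1
  set X := V + c ^ 2 + z + k * (S + c) with hXdef
  clear_value X
  set r := Real.sqrt X with hrdef
  clear_value r
  have hr2 : r ^ 2 = X := hrdef ▸ Real.sq_sqrt hX.le
  rw [← hr2]
  field_simp
  ring

lemma exp_thF_hasDeriv (hβ : 0 < β) (hX : 0 < V + c ^ 2 + z + k * (S + c)) :
    HasDerivAt (fun t => Real.exp (thF β z k V S t ^ 2))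
      (Real.exp (thF β z k V S c ^ 2) * (2 * thF β z k V S c *
        ((2 * (V + c ^ 2 + z + k * (S + c)) - (2 * c + k) * (S + c)) /
        (4 * β * (V + c ^ 2 + z + k * (S + c)) *
          Real.sqrt (V + c ^ 2 + z + k * (S + c)))))) c := by
  have hθ := thF_hasDeriv β z k V S c hβ hX
  have hp : HasDerivAt (fun s : ℝ => s ^ 2) (2 * thF β z k V S c) (thF β z k V S c) := by
    simpa using hasDerivAt_pow 2 (thF β z k V S c)
  have := (Real.hasDerivAt_exp (thF β z k V S c ^ 2)).comp c (hp.comp c hθ)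
  exact this

lemma erfi_thF_hasDeriv (hβ : 0 < β) (hX : 0 < V + c ^ 2 + z + k * (S + c)) :
    HasDerivAt (fun t => erfi (thF β z k V S t))
      (Real.exp (thF β z k V S c ^ 2) *
        ((2 * (V + c ^ 2 + z + k * (S + c)) - (2 * c + k) * (S + c)) /
        (4 * β * (V + c ^ 2 + z + k * (S + c)) *
          Real.sqrt (V + c ^ 2 + z + k * (S + c))))) c :=
  (erfi_hasDerivAt (thF β z k V S c)).comp c (thF_hasDeriv β z k V S c hβ hX)

lemma NF_hasDeriv (hβ : 0 < β) (hX : 0 < V + c ^ 2 + z + k * (S + c)) :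
    HasDerivAt (NF β z k V S) (GF β z k V S c) c := by
  have h1 : HasDerivAt (fun t : ℝ => S + t) 1 c := by
    simpa using (hasDerivAt_id c).const_add S
  have h2 := h1.mul (erfi_thF_hasDeriv β z k V S c hβ hX)
  have h3 := ((sqrtX_hasDeriv z k V S c hX).const_mul β).mul
    (exp_thF_hasDeriv β z k V S c hβ hX)
  have h := h2.sub h3
  have h' : HasDerivAt (NF β z k V S) (1 * erfi (thF β z k V S c) +
      (S + c) * (Real.exp (thF β z k V S c ^ 2) *
        ((2 * (V + c ^ 2 + z + k * (S + c)) - (2 * c + k) * (S + c)) /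
        (4 * β * (V + c ^ 2 + z + k * (S + c)) *
          Real.sqrt (V + c ^ 2 + z + k * (S + c))))) -
      (β * ((2 * c + k) / (2 * Real.sqrt (V + c ^ 2 + z + k * (S + c)))) *
        Real.exp (thF β z k V S c ^ 2) +
       β * Real.sqrt (V + c ^ 2 + z + k * (S + c)) *
        (Real.exp (thF β z k V S c ^ 2) * (2 * thF β z k V S c *
          ((2 * (V + c ^ 2 + z + k * (S + c)) - (2 * c + k) * (S + c)) /
          (4 * β * (V + c ^ 2 + z + k * (S + c)) *
            Real.sqrt (V + c ^ 2 + z + k * (S + c)))))))) c := by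
    exact h
  convert h' using 1
  rw [GF, thF]
  set X := V + c ^ 2 + z + k * (S + c) with hXdef
  have hr2 : Real.sqrt X ^ 2 = X := Real.sq_sqrt hX.le
  have hr : 0 < Real.sqrt X := Real.sqrt_pos.2 hX
  clear_value X
  set r := Real.sqrt X with hrdef
  clear_value r
  rw [← hr2]
  field_simp
  ring

lemma GF_hasDeriv (hβ : 0 < β) (hX : 0 < V + c ^ 2 + z + k * (S + c)) :
    HasDerivAt (GF β z k V S)
      (Real.exp (thF β z k V S c ^ 2) *
        ((2 * (V + c ^ 2 + z + k * (S + c)) - (2 * c + k) * (S + c)) ^ 2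
          - 8 * β ^ 2 * (V + c ^ 2 + z + k * (S + c)) ^ 2
          + 2 * β ^ 2 * (2 * c + k) ^ 2 * (V + c ^ 2 + z + k * (S + c))) /
        (8 * β * (V + c ^ 2 + z + k * (S + c)) ^ 2 *
          Real.sqrt (V + c ^ 2 + z + k * (S + c)))) c := by
  have hr : 0 < Real.sqrt (V + c ^ 2 + z + k * (S + c)) := Real.sqrt_pos.2 hX
  have hlin : HasDerivAt (fun t : ℝ => β * (2 * t + k)) (β * (2 * 1)) c :=
    (((hasDerivAt_id c).const_mul 2).add_const k).const_mul β
  have hnum := hlin.mul (exp_thF_hasDeriv β z k V S c hβ hX)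
  have hden := (sqrtX_hasDeriv z k V S c hX).const_mul 2
  have hfrac := hnum.div hden (by positivity)
  have h := (erfi_thF_hasDeriv β z k V S c hβ hX).sub hfrac
  have h' : HasDerivAt (GF β z k V S)
      (Real.exp (thF β z k V S c ^ 2) *
        ((2 * (V + c ^ 2 + z + k * (S + c)) - (2 * c + k) * (S + c)) /
        (4 * β * (V + c ^ 2 + z + k * (S + c)) *
          Real.sqrt (V + c ^ 2 + z + k * (S + c)))) -
       ((β * (2 * 1) * Real.exp (thF β z k V S c ^ 2) +
         β * (2 * c + k) * (Real.exp (thF β z k V S c ^ 2) * (2 * thF β z k V S c *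
          ((2 * (V + c ^ 2 + z + k * (S + c)) - (2 * c + k) * (S + c)) /
          (4 * β * (V + c ^ 2 + z + k * (S + c)) *
            Real.sqrt (V + c ^ 2 + z + k * (S + c))))))) *
          (2 * Real.sqrt (V + c ^ 2 + z + k * (S + c))) -
        β * (2 * c + k) * Real.exp (thF β z k V S c ^ 2) *
          (2 * ((2 * c + k) / (2 * Real.sqrt (V + c ^ 2 + z + k * (S + c)))))) /
        (2 * Real.sqrt (V + c ^ 2 + z + k * (S + c))) ^ 2) c := by
    exact h
  convert h' using 1
  rw [thF]
  set X := V + c ^ 2 + z + k * (S + c) with hXdef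
  have hr2 : Real.sqrt X ^ 2 = X := Real.sq_sqrt hX.le
  clear_value X
  set r := Real.sqrt X with hrdef
  clear_value r
  rw [← hr2]
  have hrne : r ≠ 0 := by positivity
  field_simp
  ring

end deriv

lemma keyPoly (α h y m X : ℝ) (hα : 1/2 < α) (hh : 0 < h) (hm0 : 0 ≤ m)
    (hm4 : m ≤ 4*h) (hy : -h ≤ y)
    (hXl : (12*α+4)/(2*α-1)*h^2 + 2*h*y ≤ X) :
    (2*X - m*y)^2 - 8*α*X^2 + 2*α*m^2*X ≤ 0 := by
  have hD : 0 < 2*α - 1 := by linarith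
  have h1 : (12*α+4)*h^2 ≤ (X - 2*h*y)*(2*α-1) := by
    rw [div_mul_eq_mul_div] at hXl
    have := (div_le_iff₀ hD).mp (by linarith [hXl] : (12*α+4)*h^2/(2*α-1) ≤ X - 2*h*y)
    linarith
  have hX6 : 6*h^2 + 2*h*y ≤ X := by nlinarith [sq_nonneg h]
  have hX4 : 4*h^2 ≤ X := by nlinarith [sq_nonneg h]
  have hXpos : 0 < X := by nlinarith [sq_nonneg h]
  rcases le_or_gt 0 y with hy0 | hy0
  · have hmy0 : 0 ≤ m*y := mul_nonneg hm0 hy0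
    have hmy2 : m*y ≤ 2*X := by nlinarith
    have hm2 : m^2 ≤ 16*h^2 := by nlinarith
    have hx0 : 8*α*h^2 ≤ X*(2*α-1) := by
      nlinarith [mul_nonneg (mul_nonneg hh.le hy0) hD.le]
    nlinarith [mul_nonneg hmy0 (by linarith : 0 ≤ 2*X - m*y), sq_nonneg (2*X - m*y),
      mul_le_mul_of_nonneg_right hm2 (mul_pos (by linarith : (0:ℝ) < 2*α) hXpos).le,
      mul_le_mul_of_nonneg_left hx0 (by positivity : (0:ℝ) ≤ 4*X)]
  · have hmy : -(m*y) ≤ 4*h^2 := by nlinarith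
    have hmy2 : (m*y)^2 ≤ 16*h^4 := by
      nlinarith [mul_nonneg hm0 (by linarith : 0 ≤ -y)]
    have hm2 : m^2 ≤ 16*h^2 := by nlinarith
    have hx0 : (8*α+6)*h^2 ≤ X*(2*α-1) := by
      nlinarith [mul_nonneg (mul_nonneg hh.le (by linarith : 0 ≤ -y)) hD.le]
    nlinarith [mul_le_mul_of_nonneg_left hx0 (by positivity : (0:ℝ) ≤ 4*X),
      mul_le_mul_of_nonneg_right hm2 (mul_pos (by linarith : (0:ℝ) < 2*α) hXpos).le,
      mul_le_mul_of_nonneg_left hmy (by positivity : (0:ℝ) ≤ 4*X),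
      mul_pos hXpos hXpos, sq_nonneg h,
      mul_le_mul_of_nonneg_right hX4 (by positivity : (0:ℝ) ≤ 8*h^2)]

noncomputable def WF (β y x : ℝ) : ℝ :=
  y * erfi (y / (2 * (β * Real.sqrt x))) -
    β * Real.sqrt x * Real.exp ((y / (2 * (β * Real.sqrt x))) ^ 2)

lemma WF_hasDeriv (β y x : ℝ) (hβ : 0 < β) (hx : 0 < x) :
    HasDerivAt (WF β y)
      (-(β * Real.exp ((y / (2 * (β * Real.sqrt x))) ^ 2) / (2 * Real.sqrt x))) x := by
  obtain ⟨r, hrpos, rfl⟩ : ∃ r : ℝ, 0 < r ∧ x = r ^ 2 :=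
    ⟨Real.sqrt x, Real.sqrt_pos.2 hx, (Real.sq_sqrt hx.le).symm⟩
  have hs : Real.sqrt (r ^ 2) = r := Real.sqrt_sq hrpos.le
  rw [hs]
  have hsq : HasDerivAt Real.sqrt (1 / (2 * r)) (r ^ 2) := by
    have := Real.hasDerivAt_sqrt (by positivity : (r:ℝ) ^ 2 ≠ 0)
    rwa [hs] at this
  have hden : HasDerivAt (fun u => 2 * (β * Real.sqrt u)) (2 * (β * (1 / (2 * r)))) (r ^ 2) :=
    (hsq.const_mul β).const_mul 2
  have hθ := (hasDerivAt_const (r ^ 2) y).div hden (by positivity)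
  rw [hs] at hθ
  have hθ' : HasDerivAt (fun u => y / (2 * (β * Real.sqrt u)))
      (-(y / (4 * β * r ^ 2 * r))) (r ^ 2) := by
    refine hθ.congr_deriv ?_
    field_simp
    ring
  have herfi := (erfi_hasDerivAt (y / (2 * (β * Real.sqrt (r ^ 2))))).comp (r ^ 2) hθ'
  have hp : HasDerivAt (fun s : ℝ => s ^ 2) (2 * (y / (2 * (β * Real.sqrt (r ^ 2)))))
      (y / (2 * (β * Real.sqrt (r ^ 2)))) := by
    simpa using hasDerivAt_pow 2 (y / (2 * (β * Real.sqrt (r ^ 2))))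
  have hexp := (Real.hasDerivAt_exp _).comp (r ^ 2) (hp.comp (r ^ 2) hθ')
  rw [hs] at herfi hexp
  have h := (herfi.const_mul y).sub ((hsq.const_mul β).mul hexp)
  simp only [Function.comp_def] at h
  rw [hs] at h
  have hfun : (fun x => y * erfi (y / (2 * (β * Real.sqrt x))) -
      β * Real.sqrt x * Real.exp ((y / (2 * (β * Real.sqrt x))) ^ 2)) = WF β y := by
    funext u; rw [WF]
  rw [← hfun]
  refine h.congr_deriv ?_
  field_simp
  ring

lemma WF_anti (β y x1 x2 : ℝ) (hβ : 0 < β) (hx1 : 0 < x1) (h12 : x1 ≤ x2) :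
    WF β y x2 ≤ WF β y x1 := by
  have : AntitoneOn (WF β y) (Set.Icc x1 x2) := by
    apply antitoneOn_of_deriv_nonpos (convex_Icc x1 x2)
    · intro u hu
      exact (WF_hasDeriv β y u hβ (lt_of_lt_of_le hx1 hu.1)).continuousAt.continuousWithinAt
    · intro u hu
      have hu' := interior_subset hu
      exact (WF_hasDeriv β y u hβ
        (lt_of_lt_of_le hx1 hu'.1)).differentiableAt.differentiableWithinAt
    · intro u hu
      have hu' := interior_subset hu
      rw [(WF_hasDeriv β y u hβ (lt_of_lt_of_le hx1 hu'.1)).deriv]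
      have h1 : 0 < Real.sqrt u := Real.sqrt_pos.2 (lt_of_lt_of_le hx1 hu'.1)
      have h2 := Real.exp_pos ((y / (2 * (β * Real.sqrt u))) ^ 2)
      rw [neg_nonpos]
      positivity
  exact this (Set.left_mem_Icc.2 h12) (Set.right_mem_Icc.2 h12) h12

set_option maxHeartbeats 2000000 in
/-- One-step potential bound: with `k = 2h`, `z = ((12α+4)/(2α−1))h²`,
`k' = 2h'`, `z' = ((12α+4)/(2α−1))h'²`, the potentials satisfy
`Φ_t(V + c², S + c) − Φ_{t−1}(V, S) − c·∂₂Φ_t(V, S) ≤ 0`. -/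
theorem one_step_potential_bound (ε α h' h : ℝ)
    (hε : 0 < ε) (hα : 1 / 2 < α) (hh' : 0 < h') (hh : h' ≤ h)
    (V S c : ℝ) (hV : 0 ≤ V) (hS : -h' ≤ S)
    (hc1 : -h - min S 0 ≤ c) (hc2 : c ≤ h) :
    phi ε α (V + c ^ 2 + ((12 * α + 4) / (2 * α - 1)) * h ^ 2 + (2 * h) * (S + c)) (S + c)
      - phi ε α (V + ((12 * α + 4) / (2 * α - 1)) * h' ^ 2 + (2 * h') * S) S
      - c * Dfun ε α (2 * h) (((12 * α + 4) / (2 * α - 1)) * h ^ 2) V S ≤ 0 := by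
  have hh0 : 0 < h := lt_of_lt_of_le hh' hh
  have hα0 : 0 < α := by linarith
  have hD : 0 < 2 * α - 1 := by linarith
  have hC6 : 6 ≤ (12 * α + 4) / (2 * α - 1) := by
    rw [le_div_iff₀ hD]; linarith
  set β := Real.sqrt α with hβdef
  have hβ : 0 < β := Real.sqrt_pos.2 hα0
  have hβ2 : β ^ 2 = α := Real.sq_sqrt hα0.le
  set z := ((12 * α + 4) / (2 * α - 1)) * h ^ 2 with hzdef
  set k := 2 * h with hkdef
  set z' := ((12 * α + 4) / (2 * α - 1)) * h' ^ 2 with hz'def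
  set k' := 2 * h' with hk'def
  have hz6 : 6 * h ^ 2 ≤ z := by
    rw [hzdef]; nlinarith [sq_nonneg h]
  have hz'6 : 6 * h' ^ 2 ≤ z' := by
    rw [hz'def]; nlinarith [sq_nonneg h']
  -- interval facts
  have hI : ∀ t ∈ Set.uIcc 0 c, -h ≤ t ∧ t ≤ h ∧ -h ≤ S + t := by
    intro t ht
    rcases Set.mem_uIcc.mp ht with ⟨h1, h2⟩ | ⟨h1, h2⟩
    · refine ⟨by linarith, by linarith, by linarith⟩
    · rcases le_total S 0 with hS0 | hS0
      · rw [min_eq_left hS0] at hc1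
        exact ⟨by linarith, by linarith, by linarith⟩
      · rw [min_eq_right hS0] at hc1
        exact ⟨by linarith, by linarith, by linarith⟩
  have hXpos : ∀ t ∈ Set.uIcc 0 c, 0 < V + t ^ 2 + z + k * (S + t) := by
    intro t ht
    obtain ⟨h1, h2, h3⟩ := hI t ht
    have : k * (-h) ≤ k * (S + t) :=
      mul_le_mul_of_nonneg_left h3 (by rw [hkdef]; linarith)
    have hk2 : k * (-h) = -2 * h ^ 2 := by rw [hkdef]; ring
    nlinarith [sq_nonneg t, sq_nonneg h]
  -- G is antitone on the interval
  have hGanti : AntitoneOn (GF β z k V S) (Set.uIcc 0 c) := by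
    apply antitoneOn_of_deriv_nonpos (convex_uIcc 0 c)
    · intro t ht
      exact (GF_hasDeriv β z k V S t hβ (hXpos t ht)).continuousAt.continuousWithinAt
    · intro t ht
      exact (GF_hasDeriv β z k V S t hβ
        (hXpos t (interior_subset ht))).differentiableAt.differentiableWithinAt
    · intro t ht
      have ht' := interior_subset ht
      rw [(GF_hasDeriv β z k V S t hβ (hXpos t ht')).deriv]
      obtain ⟨h1, h2, h3⟩ := hI t ht'
      have hXl : (12 * α + 4) / (2 * α - 1) * h ^ 2 + 2 * h * (S + t)
          ≤ V + t ^ 2 + z + k * (S + t) := by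
        rw [hzdef, hkdef]; nlinarith [sq_nonneg t]
      have hP := keyPoly α h (S + t) (2 * t + k)
        (V + t ^ 2 + z + k * (S + t)) hα hh0
        (by rw [hkdef]; linarith) (by rw [hkdef]; linarith) h3 hXl
      have hnum : (2 * (V + t ^ 2 + z + k * (S + t)) - (2 * t + k) * (S + t)) ^ 2
          - 8 * β ^ 2 * (V + t ^ 2 + z + k * (S + t)) ^ 2
          + 2 * β ^ 2 * (2 * t + k) ^ 2 * (V + t ^ 2 + z + k * (S + t)) ≤ 0 := by
        rw [hβ2]; nlinarith [hP]
      have hE := Real.exp_pos (thF β z k V S t ^ 2)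
      have hXt := hXpos t ht'
      have hr : 0 < Real.sqrt (V + t ^ 2 + z + k * (S + t)) := Real.sqrt_pos.2 hXt
      apply div_nonpos_of_nonpos_of_nonneg
      · exact mul_nonpos_of_nonneg_of_nonpos hE.le hnum
      · positivity
  -- Step B : N c - N 0 - c * G 0 ≤ 0
  have h0mem : (0:ℝ) ∈ Set.uIcc 0 c := Set.left_mem_uIcc
  have hcmem : c ∈ Set.uIcc 0 c := Set.right_mem_uIcc
  have hB : NF β z k V S c - NF β z k V S 0 - c * GF β z k V S 0 ≤ 0 := by
    rcases le_total 0 c with hc0 | hc0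
    · have huIcc : Set.uIcc 0 c = Set.Icc 0 c := Set.uIcc_of_le hc0
      have hρ : AntitoneOn (fun t => NF β z k V S t - t * GF β z k V S 0)
          (Set.Icc 0 c) := by
        apply antitoneOn_of_deriv_nonpos (convex_Icc 0 c)
        · intro t ht
          rw [← huIcc] at ht
          exact ((NF_hasDeriv β z k V S t hβ (hXpos t ht)).sub
            ((hasDerivAt_id t).mul_const _)).continuousAt.continuousWithinAt
        · intro t ht
          have ht' : t ∈ Set.uIcc 0 c := by rw [huIcc]; exact interior_subset ht
          exact ((NF_hasDeriv β z k V S t hβ (hXpos t ht')).sub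
            ((hasDerivAt_id t).mul_const _)).differentiableAt.differentiableWithinAt
        · intro t ht
          have htIoo : t ∈ Set.Ioo 0 c := by rwa [interior_Icc] at ht
          have ht' : t ∈ Set.uIcc 0 c := by
            rw [huIcc]; exact ⟨htIoo.1.le, htIoo.2.le⟩
          have hd : HasDerivAt (fun s => NF β z k V S s - s * GF β z k V S 0)
              (GF β z k V S t - GF β z k V S 0) t := by
            have := (NF_hasDeriv β z k V S t hβ (hXpos t ht')).sub
              ((hasDerivAt_id t).mul_const (GF β z k V S 0))
            exact this.congr_deriv (by ring)
          rw [hd.deriv]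
          have := hGanti h0mem ht' htIoo.1.le
          linarith
      have := hρ (by rw [← huIcc]; exact h0mem) (by rw [← huIcc]; exact hcmem) hc0
      simp only [zero_mul, sub_zero] at this
      linarith
    · have huIcc : Set.uIcc 0 c = Set.Icc c 0 := Set.uIcc_of_ge hc0
      have hρ : MonotoneOn (fun t => NF β z k V S t - t * GF β z k V S 0)
          (Set.Icc c 0) := by
        apply monotoneOn_of_deriv_nonneg (convex_Icc c 0)
        · intro t ht
          rw [← huIcc] at ht
          exact ((NF_hasDeriv β z k V S t hβ (hXpos t ht)).sub
            ((hasDerivAt_id t).mul_const _)).continuousAt.continuousWithinAt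
        · intro t ht
          have ht' : t ∈ Set.uIcc 0 c := by rw [huIcc]; exact interior_subset ht
          exact ((NF_hasDeriv β z k V S t hβ (hXpos t ht')).sub
            ((hasDerivAt_id t).mul_const _)).differentiableAt.differentiableWithinAt
        · intro t ht
          have htIoo : t ∈ Set.Ioo c 0 := by rwa [interior_Icc] at ht
          have ht' : t ∈ Set.uIcc 0 c := by
            rw [huIcc]; exact ⟨htIoo.1.le, htIoo.2.le⟩
          have hd : HasDerivAt (fun s => NF β z k V S s - s * GF β z k V S 0)
              (GF β z k V S t - GF β z k V S 0) t := by
            have := (NF_hasDeriv β z k V S t hβ (hXpos t ht')).sub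
              ((hasDerivAt_id t).mul_const (GF β z k V S 0))
            exact this.congr_deriv (by ring)
          rw [hd.deriv]
          have := hGanti ht' h0mem htIoo.2.le
          linarith
      have := hρ (by rw [← huIcc]; exact hcmem) (by rw [← huIcc]; exact h0mem) hc0
      simp only [zero_mul, sub_zero] at this
      linarith
  -- positivity of the relevant x-arguments
  have hX0 : 0 < V + z + k * S := by
    have := hXpos 0 h0mem
    simpa using this
  have hXc : 0 < V + c ^ 2 + z + k * (S + c) := hXpos c hcmem
  have hX1 : 0 < V + z' + k' * S := by
    have : k' * (-h') ≤ k' * S := mul_le_mul_of_nonneg_left hS (by rw [hk'def]; linarith)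
    have h2 : k' * (-h') = -2 * h' ^ 2 := by rw [hk'def]; ring
    nlinarith [sq_nonneg h']
  have hX12 : V + z' + k' * S ≤ V + z + k * S := by
    have h1 : z - z' = (12 * α + 4) / (2 * α - 1) * (h ^ 2 - h' ^ 2) := by
      rw [hzdef, hz'def]; ring
    have h2 : (k - k') * S ≥ (k - k') * (-h') := by
      apply mul_le_mul_of_nonneg_left hS
      rw [hkdef, hk'def]; linarith
    have h3 : 6 * (h ^ 2 - h' ^ 2) ≤ (12 * α + 4) / (2 * α - 1) * (h ^ 2 - h' ^ 2) := by
      apply mul_le_mul_of_nonneg_right hC6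
      nlinarith
    have h4 : (k - k') * (-h') = -2 * (h - h') * h' := by rw [hkdef, hk'def]; ring
    nlinarith
  -- rewrite phi's and Dfun
  have e1 : phi ε α (V + c ^ 2 + z + k * (S + c)) (S + c) = ε * NF β z k V S c := by
    rw [phi_closed ε α _ _ hα0 hXc, NF, thF, hβdef]
  have e2 : phi ε α (V + z' + k' * S) S = ε * WF β S (V + z' + k' * S) := by
    rw [phi_closed ε α _ _ hα0 hX1, WF, hβdef]
  have e3 : NF β z k V S 0 = WF β S (V + z + k * S) := by
    rw [NF, thF, WF]
    norm_num
  have e4 : Dfun ε α k z V S = ε * GF β z k V S 0 := by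
    have e0 : V + 0 ^ 2 + z + k * (S + 0) = V + z + k * S := by ring
    have h2r : (0:ℝ) ≤ V + z + k * S := hX0.le
    have e5 : Real.sqrt (4 * α * (V + z + k * S))
        = 2 * (β * Real.sqrt (V + z + k * S)) := by
      rw [sqrt_four_mul α _ hα0.le, hβdef]
    have e6 : S ^ 2 / (4 * α * (V + z + k * S))
        = (S / (2 * (β * Real.sqrt (V + z + k * S)))) ^ 2 := by
      rw [div_pow]
      congr 1
      rw [mul_pow, mul_pow, hβ2, Real.sq_sqrt h2r]
      ring
    rw [Dfun, GF, thF, e0, e5, e6]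
    norm_num
    ring
  -- assemble
  rw [e1, e2, e4]
  have hA : WF β S (V + z + k * S) ≤ WF β S (V + z' + k' * S) :=
    WF_anti β S _ _ hβ hX1 hX12
  rw [← e3] at hA
  have hBε : ε * (NF β z k V S c - NF β z k V S 0 - c * GF β z k V S 0) ≤ 0 :=
    mul_nonpos_of_nonneg_of_nonpos hε.le hB
  have hAε : ε * NF β z k V S 0 ≤ ε * WF β S (V + z' + k' * S) :=
    mul_le_mul_of_nonneg_left hA hε.le
  nlinarith [hBε, hAε]
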